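/- Every connected weighted graph G with terminal set S of size |S| ≥ 2 contains a spanning tree T such that Σ_{u,w∈S} d_T(u,w) ≤ (2 − 2/|S|) · Σ_{u,w∈S} d_G(u,w). -/

import Mathlib

open SimpleGraph Finset
open scoped Classical

/-- The total weight of a walk in a graph with edge-weight function `w`. -/
noncomputable def walkW {V : Type*} (w : V → V → ℝ) {G : SimpleGraph V} {u v : V}
    (p : G.Walk u v) : ℝ :=
  (p.darts.map (fun d => w d.toProd.1 d.toProd.2)).sum

/-- The weighted shortest-path distance between `u` and `v` in `G`. -/
noncomputable def wdist {V : Type*} (G : SimpleGraph V) (w : V → V → ℝ) (u v : V) : ℝ :=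
  sInf {x : ℝ | ∃ p : G.Walk u v, walkW w p = x}

/-- The `S`-routing cost of `G`: sum of distances over ordered pairs from `S`. -/
noncomputable def RC {V : Type*} (G : SimpleGraph V) (w : V → V → ℝ) (S : Finset V) : ℝ :=
  ∑ u ∈ S, ∑ v ∈ S, wdist G w u v

/-- The single-source routing cost from `v` to the nodes of `S`. -/
noncomputable def SSRC {V : Type*} (G : SimpleGraph V) (w : V → V → ℝ) (S : Finset V)
    (v : V) : ℝ :=
  ∑ u ∈ S, wdist G w v u

/-- The set of terminals of `S` lying in the component of `a` after deleting edge `s(a,b)`. -/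
noncomputable def Zcomp {V : Type*} (T : SimpleGraph V) (S : Finset V) (a b : V) : Finset V :=
  S.filter (fun z => (T.deleteEdges {s(a, b)}).Reachable a z)

section helpers

variable {V : Type*} {w : V → V → ℝ} {H : SimpleGraph V}

lemma walkW_nil {u : V} : walkW w (Walk.nil : H.Walk u u) = 0 := rfl

lemma walkW_cons {u v x : V} (h : H.Adj u v) (p : H.Walk v x) :
    walkW w (Walk.cons h p) = w u v + walkW w p := by
  simp [walkW]

lemma walkW_append {u v x : V} (p : H.Walk u v) (q : H.Walk v x) :
    walkW w (p.append q) = walkW w p + walkW w q := by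
  simp [walkW, Walk.darts_append]

lemma walkW_concat {u v x : V} (p : H.Walk u v) (h : H.Adj v x) :
    walkW w (p.concat h) = walkW w p + w v x := by
  simp [walkW, Walk.darts_concat]

lemma walkW_nonneg (hnn : ∀ a b, H.Adj a b → 0 ≤ w a b) {u v : V} (p : H.Walk u v) :
    0 ≤ walkW w p := by
  apply List.sum_nonneg
  intro x hx
  simp only [List.mem_map] at hx
  obtain ⟨d, _, rfl⟩ := hx
  exact hnn _ _ d.adj

lemma wdist_le_walkW (hnn : ∀ a b, H.Adj a b → 0 ≤ w a b) {u v : V} (p : H.Walk u v) :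
    wdist H w u v ≤ walkW w p := by
  apply csInf_le
  · exact ⟨0, by rintro x ⟨q, rfl⟩; exact walkW_nonneg hnn q⟩
  · exact ⟨p, rfl⟩

lemma wdist_nonneg (hnn : ∀ a b, H.Adj a b → 0 ≤ w a b) (u v : V) :
    0 ≤ wdist H w u v := by
  apply Real.sInf_nonneg
  rintro x ⟨q, rfl⟩
  exact walkW_nonneg hnn q

lemma wdist_self (hnn : ∀ a b, H.Adj a b → 0 ≤ w a b) (u : V) :
    wdist H w u u = 0 :=
  le_antisymm (by simpa [walkW_nil] using wdist_le_walkW hnn (Walk.nil : H.Walk u u))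
    (wdist_nonneg hnn u u)

lemma walkW_bypass_le (hnn : ∀ a b, H.Adj a b → 0 ≤ w a b) {u v : V} (p : H.Walk u v) :
    walkW w p.bypass ≤ walkW w p := by
  have hsub : p.bypass.darts ⊆ p.darts := Walk.darts_bypass_subset p
  have hnd : p.bypass.darts.Nodup := by
    have := p.bypass_isPath.edges_nodup
    exact (this.of_map _ : _)
  have hle : (p.bypass.darts : Multiset H.Dart) ≤ (p.darts : Multiset H.Dart) :=
    (Multiset.coe_le.2 (List.subperm_of_subset hnd hsub))
  have hle2 : ((p.bypass.darts.map (fun d => w d.toProd.1 d.toProd.2)) : Multiset ℝ) ≤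
      ((p.darts.map (fun d => w d.toProd.1 d.toProd.2)) : Multiset ℝ) := by
    simpa using Multiset.map_le_map (f := fun d : H.Dart => w d.toProd.1 d.toProd.2) hle
  have := Multiset.le_iff_exists_add.1 hle2
  obtain ⟨t, ht⟩ := this
  have h1 : walkW w p = walkW w p.bypass + t.sum := by
    have : ((p.darts.map (fun d => w d.toProd.1 d.toProd.2)) : Multiset ℝ).sum =
        ((p.bypass.darts.map (fun d => w d.toProd.1 d.toProd.2)) : Multiset ℝ).sum + t.sum := by
      rw [ht, Multiset.sum_add]
    simpa [walkW] using this
  have ht0 : 0 ≤ t.sum := by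
    apply Multiset.sum_nonneg
    intro x hx
    have hx' : x ∈ ((p.darts.map (fun d => w d.toProd.1 d.toProd.2)) : Multiset ℝ) := by
      rw [ht]; exact Multiset.mem_add.2 (Or.inr hx)
    simp only [Multiset.mem_coe, List.mem_map] at hx'
    obtain ⟨d, _, rfl⟩ := hx'
    exact hnn _ _ d.adj
  linarith

lemma exists_walk_eq_wdist [Fintype V] (hnn : ∀ a b, H.Adj a b → 0 ≤ w a b) {u v : V}
    (h : H.Reachable u v) : ∃ p : H.Walk u v, walkW w p = wdist H w u v := by
  have hne : (Finset.univ : Finset (H.Path u v)).Nonempty := by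
    obtain ⟨q⟩ := h
    exact ⟨⟨q.bypass, q.bypass_isPath⟩, Finset.mem_univ _⟩
  obtain ⟨p0, _, hp0⟩ := Finset.exists_min_image Finset.univ
    (fun p : H.Path u v => walkW w p.1) hne
  refine ⟨p0.1, ?_⟩
  refine le_antisymm ?_ (wdist_le_walkW hnn _)
  apply le_csInf
  · exact ⟨walkW w p0.1, ⟨p0.1, rfl⟩⟩
  rintro x ⟨q, rfl⟩
  calc walkW w p0.1 ≤ walkW w q.bypass := hp0 ⟨q.bypass, q.bypass_isPath⟩ (Finset.mem_univ _)
    _ ≤ walkW w q := walkW_bypass_le hnn q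

lemma wdist_triangle [Fintype V] (hnn : ∀ a b, H.Adj a b → 0 ≤ w a b) {u r x : V}
    (h1 : H.Reachable u r) (h2 : H.Reachable r x) :
    wdist H w u x ≤ wdist H w u r + wdist H w r x := by
  obtain ⟨p, hp⟩ := exists_walk_eq_wdist hnn h1
  obtain ⟨q, hq⟩ := exists_walk_eq_wdist hnn h2
  calc wdist H w u x ≤ walkW w (p.append q) := wdist_le_walkW hnn _
    _ = wdist H w u r + wdist H w r x := by rw [walkW_append, hp, hq]

lemma walkW_reverse (hsymm : ∀ a b, w a b = w b a) {u v : V} (p : H.Walk u v) :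
    walkW w p.reverse = walkW w p := by
  simp only [walkW, Walk.darts_reverse, List.map_reverse, List.sum_reverse, List.map_map]
  congr 1
  apply List.map_congr_left
  intro d _
  exact (hsymm _ _).symm

lemma wdist_symm [Fintype V] (hnn : ∀ a b, H.Adj a b → 0 ≤ w a b)
    (hsymm : ∀ a b, w a b = w b a) {u v : V} (h : H.Reachable u v) :
    wdist H w u v = wdist H w v u := by
  obtain ⟨p, hp⟩ := exists_walk_eq_wdist hnn h
  obtain ⟨q, hq⟩ := exists_walk_eq_wdist hnn h.symm
  refine le_antisymm ?_ ?_
  · calc wdist H w u v ≤ walkW w q.reverse := wdist_le_walkW hnn _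
      _ = wdist H w v u := by rw [walkW_reverse hsymm, hq]
  · calc wdist H w v u ≤ walkW w p.reverse := wdist_le_walkW hnn _
      _ = wdist H w u v := by rw [walkW_reverse hsymm, hp]

lemma Walk.mapLeW {G : SimpleGraph V} (hle : H ≤ G) {u v : V} (p : H.Walk u v) :
    ∃ q : G.Walk u v, walkW w q = walkW w p := by
  induction p with
  | nil => exact ⟨Walk.nil, rfl⟩
  | cons h p ih =>
    obtain ⟨q, hq⟩ := ih
    exact ⟨Walk.cons (hle h) q, by rw [walkW_cons, walkW_cons, hq]⟩

lemma wdist_anti [Fintype V] {G : SimpleGraph V} (hle : H ≤ G)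
    (hnn : ∀ a b, H.Adj a b → 0 ≤ w a b)
    (hnnG : ∀ a b, G.Adj a b → 0 ≤ w a b) {u v : V} (h : H.Reachable u v) :
    wdist G w u v ≤ wdist H w u v := by
  obtain ⟨p, hp⟩ := exists_walk_eq_wdist hnn h
  obtain ⟨q, hq⟩ := Walk.mapLeW hle p
  calc wdist G w u v ≤ walkW w q := wdist_le_walkW hnnG _
    _ = wdist H w u v := by rw [hq, hp]

end helpers

section spt

variable {V : Type*} [Fintype V] {G : SimpleGraph V} {w : V → V → ℝ}

lemma exists_parent (hconn : G.Connected) (hpos : ∀ a b, G.Adj a b → 0 < w a b)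
    (hsymm : ∀ a b, w a b = w b a) (r : V) {v : V} (hv : v ≠ r) :
    ∃ u, G.Adj u v ∧ wdist G w r u + w u v = wdist G w r v := by
  have hnn : ∀ a b, G.Adj a b → 0 ≤ w a b := fun a b h => (hpos a b h).le
  obtain ⟨p, hp⟩ := exists_walk_eq_wdist hnn (hconn.preconnected r v)
  obtain ⟨u, h, q, hq⟩ := Walk.exists_eq_cons_of_ne hv p.reverse
  have hpr : p = (Walk.cons h q).reverse := by rw [← hq, Walk.reverse_reverse]
  have hw1 : walkW w p = walkW w q.reverse + w u v := by
    rw [hpr, Walk.reverse_cons, walkW_append, walkW_cons, walkW_nil]; ring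
  refine ⟨u, h.symm, le_antisymm ?_ ?_⟩
  · have h2 : wdist G w r u ≤ walkW w q.reverse := wdist_le_walkW hnn _
    rw [← hp, hw1]; linarith
  · obtain ⟨p', hp'⟩ := exists_walk_eq_wdist hnn (hconn.preconnected r u)
    calc wdist G w r v ≤ walkW w (p'.concat h.symm) := wdist_le_walkW hnn _
      _ = wdist G w r u + w u v := by rw [walkW_concat, hp']

lemma exists_spt (hconn : G.Connected) (hpos : ∀ a b, G.Adj a b → 0 < w a b)
    (hsymm : ∀ a b, w a b = w b a) (r : V) :
    ∃ T : SimpleGraph V, T ≤ G ∧ T.IsTree ∧ ∀ v, wdist T w r v = wdist G w r v := by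
  classical
  have hnn : ∀ a b, G.Adj a b → 0 ≤ w a b := fun a b h => (hpos a b h).le
  set D : V → ℝ := fun v => wdist G w r v with hD
  have hPex : ∀ v : V, ∃ u, v ≠ r → (G.Adj u v ∧ wdist G w r u + w u v = wdist G w r v) := by
    intro v
    by_cases hv : v = r
    · exact ⟨r, fun h => absurd hv h⟩
    · obtain ⟨u, h1, h2⟩ := exists_parent hconn hpos hsymm r hv
      exact ⟨u, fun _ => ⟨h1, h2⟩⟩
  choose P hP using hPex
  have hP1 : ∀ v, v ≠ r → G.Adj (P v) v := fun v hv => (hP v hv).1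
  have hP2 : ∀ v, v ≠ r → wdist G w r (P v) + w (P v) v = wdist G w r v :=
    fun v hv => (hP v hv).2
  have hP3 : ∀ v, v ≠ r → D (P v) < D v := by
    intro v hv
    have := hP2 v hv
    have hw := hpos _ _ (hP1 v hv)
    simp only [hD]
    linarith
  set m : V → ℕ := fun v => (Finset.univ.filter (fun u => D u < D v)).card with hm'
  have hm : ∀ v, v ≠ r → m (P v) < m v := by
    intro v hv
    apply Finset.card_lt_card
    rw [Finset.ssubset_iff_of_subset]
    · exact ⟨P v, by simp [hP3 v hv], by simp⟩
    · intro u hu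
      simp only [Finset.mem_filter, Finset.mem_univ, true_and] at hu ⊢
      exact hu.trans (hP3 v hv)
  set T : SimpleGraph V :=
    { Adj := fun a b => (a ≠ r ∧ P a = b) ∨ (b ≠ r ∧ P b = a)
      symm := ⟨by intro a b h; tauto⟩
      loopless := ⟨by
        intro a h
        rcases h with ⟨ha, hpa⟩ | ⟨ha, hpa⟩ <;>
          exact absurd (hpa ▸ hP3 a ha) (lt_irrefl _)⟩ } with hT
  have hTG : T ≤ G := by
    intro a b h
    rcases h with ⟨ha, hpa⟩ | ⟨hb, hpb⟩
    · exact hpa ▸ (hP1 a ha).symm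
    · exact hpb ▸ (hP1 b hb)
  have hTadj : ∀ v, v ≠ r → T.Adj (P v) v := fun v hv => Or.inr ⟨hv, rfl⟩
  have hnnT : ∀ a b, T.Adj a b → 0 ≤ w a b := fun a b h => hnn a b (hTG h)
  have hreach : ∀ v, T.Reachable r v := by
    have key : ∀ n v, m v = n → T.Reachable r v := by
      intro n
      induction n using Nat.strong_induction_on with
      | _ n ih =>
        intro v hv
        by_cases hvr : v = r
        · subst hvr; exact Reachable.refl v
        · have h1 := hm v hvr
          exact (ih (m (P v)) (hv ▸ h1) (P v) rfl).trans (hTadj v hvr).reachable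
    exact fun v => key (m v) v rfl
  have hTconn : T.Connected := by
    rw [connected_iff]
    exact ⟨fun u v => (hreach u).symm.trans (hreach v), hconn.nonempty⟩
  set anc : V → V → Prop := Relation.ReflTransGen (fun x y => x ≠ r ∧ y = P x) with hanc
  have hancD : ∀ x y, anc x y → D y ≤ D x := by
    intro x y h
    induction h with
    | refl => exact le_refl _
    | tail h1 h2 ih =>
      refine le_trans ?_ ih
      rw [h2.2]
      exact (hP3 _ h2.1).le
  have hacyc : T.IsAcyclic := by
    rw [isAcyclic_iff_forall_adj_isBridge]
    suffices key : ∀ a b, (a ≠ r ∧ P a = b) → T.IsBridge s(a, b) by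
      intro a b hab
      rcases hab with h | h
      · exact key a b h
      · rw [Sym2.eq_swap]; exact key b a h
    rintro a b ⟨ha, hb⟩
    rw [isBridge_iff]
    intro hre
    obtain ⟨pw⟩ := hre
    have hstep : ∀ {x y : V}, (T \ fromEdgeSet {s(a, b)}).Adj x y → anc x a → anc y a := by
      intro x y hxy hx
      obtain ⟨hTxy, hne⟩ := hxy
      have hsne : s(x, y) ≠ s(a, b) := by
        intro hh
        exact hne (by rw [fromEdgeSet_adj]; exact ⟨by simp [hh], hTxy.ne⟩)
      rcases hTxy with ⟨hx', hpx⟩ | ⟨hy', hpy⟩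
      · by_cases hxa : x = a
        · exfalso; apply hsne; rw [hxa, ← hb, ← hpx, hxa]
        · rcases Relation.ReflTransGen.cases_head hx with heq | ⟨c, hc, hac⟩
          · exact absurd heq hxa
          · rwa [← hpx, ← hc.2]
      · exact Relation.ReflTransGen.head ⟨hy', hpy.symm⟩ hx
    have hwalk : ∀ {x y : V} (p : (T \ fromEdgeSet {s(a, b)}).Walk x y), anc x a → anc y a := by
      intro x y p
      induction p with
      | nil => exact id
      | cons h p ih => exact fun hx => ih (hstep h hx)
    have hba : anc b a := hwalk pw Relation.ReflTransGen.refl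
    have h1 : D a ≤ D b := hancD b a hba
    have h2 : D b < D a := hb ▸ hP3 a ha
    linarith
  have hle1 : ∀ v, wdist T w r v ≤ D v := by
    have key : ∀ n v, m v = n → wdist T w r v ≤ D v := by
      intro n
      induction n using Nat.strong_induction_on with
      | _ n ih =>
        intro v hv
        by_cases hvr : v = r
        · subst hvr
          rw [wdist_self hnnT]
          exact wdist_nonneg hnn _ _
        · obtain ⟨p, hp⟩ := exists_walk_eq_wdist hnnT (hreach (P v))
          have h4 : wdist T w r v ≤ walkW w (p.concat (hTadj v hvr)) :=
            wdist_le_walkW hnnT _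
          rw [walkW_concat, hp] at h4
          have h5 : wdist T w r (P v) ≤ D (P v) := ih (m (P v)) (hv ▸ hm v hvr) (P v) rfl
          have h6 := hP2 v hvr
          simp only [hD] at h6 ⊢
          linarith
    exact fun v => key (m v) v rfl
  refine ⟨T, hTG, ⟨hTconn, hacyc⟩, fun v => le_antisymm (hle1 v) ?_⟩
  exact wdist_anti hTG hnnT hnn (hreach v)

end spt

/-- Every connected weighted graph contains a spanning tree whose `S`-routing cost is at
most `(2 - 2/|S|)` times the routing cost of the graph. -/
theorem stmt11 {V : Type*} [Fintype V] (G : SimpleGraph V) (w : V → V → ℝ)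
    (hconn : G.Connected) (hpos : ∀ a b, G.Adj a b → 0 < w a b)
    (hsymm : ∀ a b, w a b = w b a) (S : Finset V) (hS : 2 ≤ S.card) :
    ∃ T : SimpleGraph V, T ≤ G ∧ T.IsTree ∧
      ∑ u ∈ S, ∑ x ∈ S, wdist T w u x ≤
        (2 - 2 / (S.card : ℝ)) * ∑ u ∈ S, ∑ x ∈ S, wdist G w u x := by
  classical
  have hnn : ∀ a b, G.Adj a b → 0 ≤ w a b := fun a b h => (hpos a b h).le
  have hSne : S.Nonempty := Finset.card_pos.1 (by omega)
  obtain ⟨r, hrS, hrmin⟩ := Finset.exists_min_image S (fun u => ∑ x ∈ S, wdist G w u x) hSne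
  obtain ⟨T, hTG, hTree, hTd⟩ := exists_spt hconn hpos hsymm r
  have hnnT : ∀ a b, T.Adj a b → 0 ≤ w a b := fun a b h => hnn a b (hTG h)
  have hTreach : ∀ u v : V, T.Reachable u v := fun u v => hTree.isConnected.preconnected u v
  set k : ℝ := (S.card : ℝ) with hk
  have hk2 : (2:ℝ) ≤ k := by rw [hk]; exact_mod_cast hS
  set A : ℝ := ∑ x ∈ S, wdist T w r x with hA
  have hAG : A = ∑ x ∈ S, wdist G w r x := Finset.sum_congr rfl (fun x _ => hTd x)
  have hsymT : ∀ u, wdist T w u r = wdist T w r u := fun u =>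
    wdist_symm hnnT hsymm (hTreach u r)
  have key : ∀ u ∈ S, ∑ x ∈ S, wdist T w u x ≤
      (k - 1) * wdist T w r u + (A - wdist T w r u) := by
    intro u hu
    rw [← Finset.add_sum_erase S _ hu, wdist_self hnnT, zero_add]
    calc ∑ x ∈ S.erase u, wdist T w u x
        ≤ ∑ x ∈ S.erase u, (wdist T w u r + wdist T w r x) :=
          Finset.sum_le_sum (fun x _ => wdist_triangle hnnT (hTreach u r) (hTreach r x))
      _ = ((S.erase u).card : ℝ) * wdist T w u r + ∑ x ∈ S.erase u, wdist T w r x := by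
          rw [Finset.sum_add_distrib, Finset.sum_const, nsmul_eq_mul]
      _ = (k - 1) * wdist T w r u + (A - wdist T w r u) := by
          rw [hsymT u, Finset.card_erase_of_mem hu]
          have h1 : A = wdist T w r u + ∑ x ∈ S.erase u, wdist T w r x :=
            (Finset.add_sum_erase S _ hu).symm
          have hc1 : 1 ≤ S.card := by omega
          rw [Nat.cast_sub hc1]
          push_cast
          rw [← hk]
          linarith
  have main1 : ∑ u ∈ S, ∑ x ∈ S, wdist T w u x ≤ (2 * k - 2) * A := by
    calc ∑ u ∈ S, ∑ x ∈ S, wdist T w u x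
        ≤ ∑ u ∈ S, ((k - 1) * wdist T w r u + (A - wdist T w r u)) := Finset.sum_le_sum key
      _ = (2 * k - 2) * A := by
          rw [Finset.sum_add_distrib, ← Finset.mul_sum, Finset.sum_sub_distrib,
            Finset.sum_const, nsmul_eq_mul, ← hA, ← hk]
          ring
  have h2 : k * A ≤ ∑ u ∈ S, ∑ x ∈ S, wdist G w u x := by
    have hmin : ∀ u ∈ S, A ≤ ∑ x ∈ S, wdist G w u x := fun u hu => hAG ▸ hrmin u hu
    calc k * A = ∑ _u ∈ S, A := by rw [Finset.sum_const, nsmul_eq_mul, ← hk]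
      _ ≤ _ := Finset.sum_le_sum hmin
  have hA0 : 0 ≤ A := Finset.sum_nonneg fun x _ => wdist_nonneg hnnT _ _
  have hk0 : (0:ℝ) < k := by linarith
  refine ⟨T, hTG, hTree, ?_⟩
  have hfac : 0 ≤ 2 - 2 / k := by
    have h3 : 2 / k ≤ 1 := by rw [div_le_one hk0]; linarith
    linarith
  calc ∑ u ∈ S, ∑ x ∈ S, wdist T w u x ≤ (2 * k - 2) * A := main1
    _ = (2 - 2 / k) * (k * A) := by field_simp
    _ ≤ (2 - 2 / k) * ∑ u ∈ S, ∑ x ∈ S, wdist G w u x := by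
        exact mul_le_mul_of_nonneg_left h2 hfac
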